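/- For the path P_n (n ≥ 2): st_id(P_n) = 2 if n ≡ 2 (mod 3), and st_id(P_n) = 1 otherwise. -/

import Mathlib

open SimpleGraph

/-- `S` is an independent dominating set of `G`. -/
def SimpleGraph.IsIndepDomSet {V : Type*} (G : SimpleGraph V) (S : Set V) : Prop :=
  (S.Pairwise fun u v => ¬ G.Adj u v) ∧ ∀ v ∉ S, ∃ u ∈ S, G.Adj v u

/-- The independent domination number `γᵢ(G)`. -/
noncomputable def indepDomNum (V : Type*) [Fintype V] (G : SimpleGraph V) : ℕ :=
  sInf {n | ∃ S : Finset V, G.IsIndepDomSet ↑S ∧ S.card = n}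

/-- The independent domination stability `st_id(G)`: the minimum number of
vertices whose removal changes the independent domination number. -/
noncomputable def idStability (V : Type*) [Fintype V] [DecidableEq V]
    (G : SimpleGraph V) : ℕ :=
  sInf {k | ∃ A : Finset V, A.card = k ∧ A.Nonempty ∧
    indepDomNum _ (G.induce (↑(Aᶜ) : Set V)) ≠ indepDomNum V G}

/-! ### Auxiliary arithmetic lemmas -/

/-- Pattern of an independent dominating set on segment `[a, b)` of the path. -/
def pat (a b i : ℕ) : Prop :=
  a ≤ i ∧ i < b ∧ ((i - a) % 3 = 1 ∨ ((b - a) % 3 = 1 ∧ i + 1 = b))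

instance pat.decPred (a b : ℕ) : DecidablePred (pat a b) := fun i => by
  unfold pat; infer_instance

lemma pat_indep {a b i j : ℕ} (hi : pat a b i) (hj : pat a b j) (h : i + 1 = j) : False := by
  unfold pat at hi hj; omega

lemma pat_dom {a b u : ℕ} (h1 : a ≤ u) (h2 : u < b) :
    ∃ s, pat a b s ∧ (s = u ∨ s + 1 = u ∨ u + 1 = s) := by
  unfold pat
  by_cases hc2 : (u - a) % 3 = 2
  · exact ⟨u - 1, by omega, by omega⟩
  by_cases hc1 : (u - a) % 3 = 1
  · exact ⟨u, by omega, by omega⟩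
  by_cases hb : u + 1 < b
  · exact ⟨u + 1, by omega, by omega⟩
  · exact ⟨u, by omega, by omega⟩

lemma pat_card (a b n : ℕ) (hbn : b ≤ n) :
    ((Finset.range n).filter (pat a b)).card = (b - a + 2) / 3 := by
  rcases le_or_gt b a with hab | hab
  · have : ((Finset.range n).filter (pat a b)) = ∅ := by
      ext i; simp [pat]; omega
    rw [this]; simp; omega
  rw [show (b - a + 2) / 3 = (Finset.range ((b - a + 2) / 3)).card by simp]
  apply Finset.card_nbij' (i := fun i => (i - a) / 3) (j := fun k => min (a + 1 + 3 * k) (b - 1))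
  · intro i hi; simp only [Finset.mem_coe, Finset.mem_filter, Finset.mem_range, pat] at hi ⊢; omega
  · intro k hk; simp only [Finset.mem_coe, Finset.mem_filter, Finset.mem_range, pat] at hk ⊢; omega
  · intro i hi; simp only [Finset.mem_coe, Finset.mem_filter, Finset.mem_range, pat] at hi; dsimp only; omega
  · intro k hk; simp only [Finset.mem_coe, Finset.mem_range] at hk; dsimp only; omega

lemma core_lb {T : Finset ℕ} {a b : ℕ}
    (hdom : ∀ u, a ≤ u → u < b →
      ∃ s ∈ T, a ≤ s ∧ s < b ∧ (s = u ∨ s + 1 = u ∨ u + 1 = s)) :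
    (b - a + 2) / 3 ≤ (T.filter fun s => a ≤ s ∧ s < b).card := by
  classical
  rcases le_or_gt b a with hab | hab
  · have : b - a = 0 := by omega
    simp [this]
  set T' := T.filter fun s => a ≤ s ∧ s < b with hT'
  have key : (Finset.Ico a b).card ≤ 3 * T'.card := by
    set f : ℕ → ℕ := fun u =>
      if h : a ≤ u ∧ u < b then (hdom u h.1 h.2).choose else a with hf
    apply Finset.card_le_mul_card_image_of_maps_to (f := f)
    · intro u hu
      rw [Finset.mem_Ico] at hu
      obtain ⟨hs, hrest⟩ := (hdom u hu.1 hu.2).choose_spec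
      simp only [hf, dif_pos (And.intro hu.1 hu.2)]
      exact Finset.mem_filter.2 ⟨hs, hrest.1, hrest.2.1⟩
    · intro s _
      calc ((Finset.Ico a b).filter fun u => f u = s).card
          ≤ ({s - 1, s, s + 1} : Finset ℕ).card := by
            apply Finset.card_le_card
            intro u hu
            rw [Finset.mem_filter, Finset.mem_Ico] at hu
            obtain ⟨⟨hu1, hu2⟩, hfu⟩ := hu
            obtain ⟨_, hrest⟩ := (hdom u hu1 hu2).choose_spec
            rw [hf] at hfu; simp only [dif_pos (And.intro hu1 hu2)] at hfu
            rw [hfu] at hrest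
            simp only [Finset.mem_insert, Finset.mem_singleton]
            omega
        _ ≤ 3 := by
            apply (Finset.card_insert_le _ _).trans
            exact Nat.succ_le_succ ((Finset.card_insert_le _ _).trans (by simp))
  rw [Nat.card_Ico] at key
  omega

lemma idn_eq {V : Type*} [Fintype V] (G : SimpleGraph V) (t : ℕ) (S₀ : Finset V)
    (h₀ : G.IsIndepDomSet ↑S₀) (hc : S₀.card = t)
    (hlb : ∀ S : Finset V, G.IsIndepDomSet ↑S → t ≤ S.card) :
    indepDomNum V G = t := by
  have hmem : t ∈ {m | ∃ S : Finset V, G.IsIndepDomSet ↑S ∧ S.card = m} := ⟨S₀, h₀, hc⟩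
  refine le_antisymm (Nat.sInf_le hmem) (le_csInf ⟨t, hmem⟩ ?_)
  rintro m ⟨S, hS, rfl⟩
  exact hlb S hS

lemma fin_filter_card {n : ℕ} (Q : ℕ → Prop) [DecidablePred Q] :
    (Finset.univ.filter (fun x : Fin n => Q x.val)).card
      = ((Finset.range n).filter Q).card := by
  apply Finset.card_nbij (i := Fin.val)
  · intro x hx; simp at hx ⊢; exact hx
  · exact Function.Injective.injOn Fin.val_injective
  · intro v hv
    simp only [Finset.coe_filter, Finset.mem_coe, Finset.mem_filter, Finset.mem_range] at hv
    exact ⟨⟨v, hv.1⟩, by simpa using hv.2, rfl⟩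

lemma subtype_filter_card {n : ℕ} (s : Set (Fin n)) [Fintype s] [DecidablePred (· ∈ s)]
    (Q : ℕ → Prop) [DecidablePred Q] (hQ : ∀ v : Fin n, Q v.val → v ∈ s) :
    (Finset.univ.filter (fun x : s => Q x.val.val)).card
      = ((Finset.range n).filter Q).card := by
  apply Finset.card_nbij (i := fun x : s => x.val.val)
  · intro x hx; simp at hx ⊢; exact hx
  · intro x _ y _ h; exact Subtype.ext (Fin.val_injective h)
  · intro v hv
    simp only [Finset.coe_filter, Finset.mem_coe, Finset.mem_filter, Finset.mem_range] at hv
    exact ⟨⟨⟨v, hv.1⟩, hQ _ hv.2⟩, by simpa using hv.2, rfl⟩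

/-! ### Independent domination number of the path -/

lemma path_idn (n : ℕ) : indepDomNum (Fin n) (pathGraph n) = (n + 2) / 3 := by
  classical
  apply idn_eq _ _ (Finset.univ.filter (fun x : Fin n => pat 0 n x.val))
  · constructor
    · intro u hu v hv hne hadj
      simp only [Finset.coe_filter, Set.mem_setOf_eq, Finset.mem_univ, true_and] at hu hv
      rw [pathGraph_adj] at hadj
      rcases hadj with h | h
      · exact pat_indep hu hv h
      · exact pat_indep hv hu h
    · intro v hv
      simp only [Finset.coe_filter, Set.mem_setOf_eq, Finset.mem_univ, true_and] at hv
      obtain ⟨s, hs, hrel⟩ := pat_dom (Nat.zero_le v.val) v.isLt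
      have hsn : s < n := hs.2.1
      refine ⟨⟨s, hsn⟩, by simpa using hs, ?_⟩
      rw [pathGraph_adj]
      rcases hrel with h | h | h
      · exact absurd (h ▸ hs) hv
      · right; exact h
      · left; exact h
  · rw [fin_filter_card, pat_card 0 n n le_rfl]; omega
  · intro S hS
    set T := S.image Fin.val with hT
    have hcard : T.card = S.card := Finset.card_image_of_injective _ Fin.val_injective
    have h := core_lb (T := T) (a := 0) (b := n) ?_
    · calc (n + 2) / 3 = (n - 0 + 2) / 3 := by omega
        _ ≤ (T.filter fun s => 0 ≤ s ∧ s < n).card := h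
        _ ≤ T.card := Finset.card_le_card (Finset.filter_subset _ _)
        _ = S.card := hcard
    · intro u _ hu2
      by_cases hmem : (⟨u, hu2⟩ : Fin n) ∈ S
      · exact ⟨u, Finset.mem_image.2 ⟨_, hmem, rfl⟩, Nat.zero_le _, hu2, Or.inl rfl⟩
      · obtain ⟨w, hw, hadj⟩ := hS.2 ⟨u, hu2⟩ (by simpa using hmem)
        rw [pathGraph_adj] at hadj
        refine ⟨w.val, Finset.mem_image.2 ⟨_, by simpa using hw, rfl⟩,
          Nat.zero_le _, w.isLt, ?_⟩
        simp only [Fin.val_mk] at hadj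
        omega

/-! ### Independent domination number of the path with one vertex removed -/

lemma hole_idn (n : ℕ) (v : Fin n) :
    indepDomNum _ ((pathGraph n).induce (↑(({v} : Finset (Fin n))ᶜ) : Set (Fin n)))
      = (v.val + 2) / 3 + (n - v.val + 1) / 3 := by
  classical
  set s : Set (Fin n) := (↑(({v} : Finset (Fin n))ᶜ) : Set (Fin n)) with hs
  have hmem_s : ∀ x : Fin n, x ∈ s ↔ x.val ≠ v.val := by
    intro x
    simp only [hs, Finset.coe_compl, Finset.coe_singleton, Set.mem_compl_iff,
      Set.mem_singleton_iff]
    exact not_congr (Fin.val_eq_val x v).symm |>.symm |>.symm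
  apply idn_eq _ _ (Finset.univ.filter
    (fun x : s => pat 0 v.val x.val.val ∨ pat (v.val + 1) n x.val.val))
  · constructor
    · intro u hu w hw hne hadj
      simp only [Finset.coe_filter, Set.mem_setOf_eq, Finset.mem_univ, true_and] at hu hw
      simp only [comap_adj, Function.Embedding.coe_subtype, pathGraph_adj] at hadj
      simp only [pat] at hu hw
      omega
    · intro x hx
      simp only [Finset.coe_filter, Set.mem_setOf_eq, Finset.mem_univ, true_and] at hx
      have hxv : x.val.val ≠ v.val := (hmem_s x.val).1 x.2
      rcases Nat.lt_or_ge x.val.val v.val with hlt | hge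
      · obtain ⟨t, ht, hrel⟩ := pat_dom (a := 0) (b := v.val) (Nat.zero_le _) hlt
        have htn : t < n := lt_trans ht.2.1 v.isLt
        have htv : t ≠ v.val := by have := ht.2.1; omega
        refine ⟨⟨⟨t, htn⟩, (hmem_s _).2 htv⟩, ?_, ?_⟩
        · simp only [Finset.coe_filter, Set.mem_setOf_eq, Finset.mem_univ, true_and]
          exact Or.inl ht
        · simp only [comap_adj, Function.Embedding.coe_subtype, pathGraph_adj]
          rcases hrel with h | h | h
          · exact absurd (h ▸ (Or.inl ht : pat 0 v.val t ∨ pat (v.val + 1) n t)) hx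
          · right; exact h
          · left; exact h
      · have hgt : v.val + 1 ≤ x.val.val := by omega
        obtain ⟨t, ht, hrel⟩ := pat_dom (a := v.val + 1) (b := n) hgt x.val.isLt
        have htn : t < n := ht.2.1
        have htv : t ≠ v.val := by have := ht.1; omega
        refine ⟨⟨⟨t, htn⟩, (hmem_s _).2 htv⟩, ?_, ?_⟩
        · simp only [Finset.coe_filter, Set.mem_setOf_eq, Finset.mem_univ, true_and]
          exact Or.inr ht
        · simp only [comap_adj, Function.Embedding.coe_subtype, pathGraph_adj]
          rcases hrel with h | h | h
          · exact absurd (h ▸ (Or.inr ht : pat 0 v.val t ∨ pat (v.val + 1) n t)) hx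
          · right; exact h
          · left; exact h
  · rw [subtype_filter_card s (fun u => pat 0 v.val u ∨ pat (v.val + 1) n u) (fun u hu => by
      rw [hmem_s]
      simp only [pat] at hu
      omega)]
    have hsplit : (Finset.range n).filter (fun u => pat 0 v.val u ∨ pat (v.val + 1) n u)
        = ((Finset.range n).filter (pat 0 v.val)) ∪ ((Finset.range n).filter (pat (v.val + 1) n)) :=
      Finset.filter_or _ _ _
    rw [hsplit, Finset.card_union_of_disjoint (by
      rw [Finset.disjoint_left]
      intro a h1 h2
      simp only [Finset.mem_filter, pat] at h1 h2
      omega)]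
    rw [pat_card 0 v.val n (le_of_lt v.isLt), pat_card (v.val + 1) n n le_rfl]
    have := v.isLt
    omega
  · intro S hS
    set T := S.image (fun x : s => x.val.val) with hT
    have hinj : Function.Injective (fun x : s => x.val.val) := by
      intro x y h; exact Subtype.ext (Fin.val_injective h)
    have hcard : T.card = S.card := Finset.card_image_of_injective _ hinj
    have hdomL : ∀ u, 0 ≤ u → u < v.val →
        ∃ t ∈ T, 0 ≤ t ∧ t < v.val ∧ (t = u ∨ t + 1 = u ∨ u + 1 = t) := by
      intro u _ hu
      have hun : u < n := lt_trans hu v.isLt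
      have huv : u ≠ v.val := by omega
      by_cases hmem : (⟨⟨u, hun⟩, (hmem_s _).2 huv⟩ : s) ∈ S
      · exact ⟨u, Finset.mem_image.2 ⟨_, hmem, rfl⟩, Nat.zero_le _, hu, Or.inl rfl⟩
      · obtain ⟨w, hw, hadj⟩ := hS.2 _ (by simpa using hmem)
        have hadj' : u + 1 = w.val.val ∨ w.val.val + 1 = u := by
          simpa [comap_adj, Function.Embedding.coe_subtype, pathGraph_adj] using hadj
        have hwv : w.val.val ≠ v.val := (hmem_s _).1 w.2
        exact ⟨w.val.val, Finset.mem_image.2 ⟨_, by simpa using hw, rfl⟩,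
          Nat.zero_le _, by omega, by omega⟩
    have hdomR : ∀ u, v.val + 1 ≤ u → u < n →
        ∃ t ∈ T, v.val + 1 ≤ t ∧ t < n ∧ (t = u ∨ t + 1 = u ∨ u + 1 = t) := by
      intro u hu1 hu2
      have huv : u ≠ v.val := by omega
      by_cases hmem : (⟨⟨u, hu2⟩, (hmem_s _).2 huv⟩ : s) ∈ S
      · exact ⟨u, Finset.mem_image.2 ⟨_, hmem, rfl⟩, hu1, hu2, Or.inl rfl⟩
      · obtain ⟨w, hw, hadj⟩ := hS.2 _ (by simpa using hmem)
        have hadj' : u + 1 = w.val.val ∨ w.val.val + 1 = u := by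
          simpa [comap_adj, Function.Embedding.coe_subtype, pathGraph_adj] using hadj
        have hwv : w.val.val ≠ v.val := (hmem_s _).1 w.2
        have hwn : w.val.val < n := w.val.isLt
        exact ⟨w.val.val, Finset.mem_image.2 ⟨_, by simpa using hw, rfl⟩,
          by omega, hwn, by omega⟩
    have h1 := core_lb (T := T) (a := 0) (b := v.val) hdomL
    have h2 := core_lb (T := T) (a := v.val + 1) (b := n) hdomR
    have hdisj : Disjoint (T.filter fun t => 0 ≤ t ∧ t < v.val)
        (T.filter fun t => v.val + 1 ≤ t ∧ t < n) := by
      rw [Finset.disjoint_left]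
      intro a ha hb
      simp only [Finset.mem_filter] at ha hb
      omega
    have hsub : (T.filter fun t => 0 ≤ t ∧ t < v.val) ∪
        (T.filter fun t => v.val + 1 ≤ t ∧ t < n) ⊆ T :=
      Finset.union_subset (Finset.filter_subset _ _) (Finset.filter_subset _ _)
    have := Finset.card_union_of_disjoint hdisj
    have hle := Finset.card_le_card hsub
    have := v.isLt
    omega

/-! ### Independent domination number of the path with the first two vertices removed -/

lemma prefix2_idn (n : ℕ) (h0 : 0 < n) (h1 : 1 < n) :
    indepDomNum _ ((pathGraph n).induce
        (↑(({⟨0, h0⟩, ⟨1, h1⟩} : Finset (Fin n))ᶜ) : Set (Fin n)))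
      = n / 3 := by
  classical
  set s : Set (Fin n) := (↑(({⟨0, h0⟩, ⟨1, h1⟩} : Finset (Fin n))ᶜ) : Set (Fin n)) with hs
  have hmem_s : ∀ x : Fin n, x ∈ s ↔ 2 ≤ x.val := by
    intro x
    simp only [hs, Finset.coe_compl, Set.mem_compl_iff, Finset.mem_coe, Finset.mem_insert,
      Finset.mem_singleton, Fin.ext_iff, Fin.val_mk]
    omega
  apply idn_eq _ _ (Finset.univ.filter (fun x : s => pat 2 n x.val.val))
  · constructor
    · intro u hu w hw hne hadj
      simp only [Finset.coe_filter, Set.mem_setOf_eq, Finset.mem_univ, true_and] at hu hw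
      simp only [comap_adj, Function.Embedding.coe_subtype, pathGraph_adj] at hadj
      simp only [pat] at hu hw
      omega
    · intro x hx
      simp only [Finset.coe_filter, Set.mem_setOf_eq, Finset.mem_univ, true_and] at hx
      have hx2 : 2 ≤ x.val.val := (hmem_s x.val).1 x.2
      obtain ⟨t, ht, hrel⟩ := pat_dom (a := 2) (b := n) hx2 x.val.isLt
      refine ⟨⟨⟨t, ht.2.1⟩, (hmem_s _).2 ht.1⟩, ?_, ?_⟩
      · simp only [Finset.coe_filter, Set.mem_setOf_eq, Finset.mem_univ, true_and]
        exact ht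
      · simp only [comap_adj, Function.Embedding.coe_subtype, pathGraph_adj]
        rcases hrel with h | h | h
        · exact absurd (h ▸ ht) hx
        · right; exact h
        · left; exact h
  · rw [subtype_filter_card s (pat 2 n) (fun u hu => by rw [hmem_s]; exact hu.1)]
    rw [pat_card 2 n n le_rfl]
    omega
  · intro S hS
    set T := S.image (fun x : s => x.val.val) with hT
    have hinj : Function.Injective (fun x : s => x.val.val) := by
      intro x y h; exact Subtype.ext (Fin.val_injective h)
    have hcard : T.card = S.card := Finset.card_image_of_injective _ hinj
    have hdom : ∀ u, 2 ≤ u → u < n →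
        ∃ t ∈ T, 2 ≤ t ∧ t < n ∧ (t = u ∨ t + 1 = u ∨ u + 1 = t) := by
      intro u hu1 hu2
      by_cases hmem : (⟨⟨u, hu2⟩, (hmem_s _).2 hu1⟩ : s) ∈ S
      · exact ⟨u, Finset.mem_image.2 ⟨_, hmem, rfl⟩, hu1, hu2, Or.inl rfl⟩
      · obtain ⟨w, hw, hadj⟩ := hS.2 _ (by simpa using hmem)
        have hadj' : u + 1 = w.val.val ∨ w.val.val + 1 = u := by
          simpa [comap_adj, Function.Embedding.coe_subtype, pathGraph_adj] using hadj
        have hw2 : 2 ≤ w.val.val := (hmem_s _).1 w.2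
        have hwn : w.val.val < n := w.val.isLt
        exact ⟨w.val.val, Finset.mem_image.2 ⟨_, by simpa using hw, rfl⟩, hw2, hwn, by omega⟩
    have h1 := core_lb (T := T) (a := 2) (b := n) hdom
    have hle := Finset.card_le_card (Finset.filter_subset (fun t => 2 ≤ t ∧ t < n) T)
    omega

/-- For the path `P_n` (`n ≥ 2`): `st_id(P_n) = 2` if `n ≡ 2 (mod 3)`, and
`st_id(P_n) = 1` otherwise. -/
theorem stmt11 (n : ℕ) (hn : 2 ≤ n) :
    idStability _ (pathGraph n) = if n % 3 = 2 then 2 else 1 := by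
  classical
  unfold idStability
  set Sset := {k | ∃ A : Finset (Fin n), A.card = k ∧ A.Nonempty ∧
    indepDomNum _ ((pathGraph n).induce (↑(Aᶜ) : Set (Fin n)))
      ≠ indepDomNum (Fin n) (pathGraph n)} with hSset
  have h0notmem : 0 ∉ Sset := by
    rintro ⟨A, hA0, hAne, -⟩
    rw [Finset.card_eq_zero.mp hA0] at hAne
    exact Finset.not_nonempty_empty hAne
  by_cases hmod : n % 3 = 2
  · have h2mem : 2 ∈ Sset := by
      refine ⟨({⟨0, by omega⟩, ⟨1, by omega⟩} : Finset (Fin n)), ?_, ?_, ?_⟩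
      · rw [Finset.card_insert_of_notMem (by simp [Fin.ext_iff]), Finset.card_singleton]
      · exact ⟨_, Finset.mem_insert_self _ _⟩
      · rw [prefix2_idn n (by omega) (by omega), path_idn]
        omega
    have h1notmem : 1 ∉ Sset := by
      rintro ⟨A, hA1, -, hne⟩
      obtain ⟨v, rfl⟩ := Finset.card_eq_one.mp hA1
      rw [hole_idn, path_idn] at hne
      have := v.isLt
      omega
    have hinf := Nat.sInf_mem (⟨2, h2mem⟩ : Sset.Nonempty)
    have hle : sInf Sset ≤ 2 := Nat.sInf_le h2mem
    have hne0 : sInf Sset ≠ 0 := fun h => h0notmem (h ▸ hinf)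
    have hne1 : sInf Sset ≠ 1 := fun h => h1notmem (h ▸ hinf)
    rw [if_pos hmod]
    omega
  · have h1mem : 1 ∈ Sset := by
      by_cases hm0 : n % 3 = 0
      · refine ⟨({⟨1, by omega⟩} : Finset (Fin n)), Finset.card_singleton _,
          ⟨_, Finset.mem_singleton_self _⟩, ?_⟩
        rw [hole_idn, path_idn]
        simp only [Fin.val_mk]
        omega
      · refine ⟨({⟨n - 1, by omega⟩} : Finset (Fin n)), Finset.card_singleton _,
          ⟨_, Finset.mem_singleton_self _⟩, ?_⟩
        rw [hole_idn, path_idn]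
        simp only [Fin.val_mk]
        omega
    have hinf := Nat.sInf_mem (⟨1, h1mem⟩ : Sset.Nonempty)
    have hle : sInf Sset ≤ 1 := Nat.sInf_le h1mem
    have hne0 : sInf Sset ≠ 0 := fun h => h0notmem (h ▸ hinf)
    rw [if_neg hmod]
    omega
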